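/- Let R be a 2-torsion free commutative ring with identity and n ≥ 1. Then every Jordan derivation of the upper triangular matrix algebra Tₙ(R) is a derivation. -/

import Mathlib

open Matrix

/-- The `R`-subalgebra of `n × n` upper triangular matrices. -/
def upperTriangular (n : ℕ) (R : Type*) [CommRing R] :
    Subalgebra R (Matrix (Fin n) (Fin n) R) where
  carrier := {M | M.BlockTriangular id}
  mul_mem' hM hN := hM.mul hN
  add_mem' hM hN := hM.add hN
  algebraMap_mem' r := by
    intro i j hij
    simp only [Matrix.algebraMap_matrix_apply]
    exact if_neg (fun h => absurd h (ne_of_gt hij))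

section Abstract

variable {U : Type*} [Ring U]

lemma jordan_aux (d : U →+ U)
    (htf : ∀ x : U, x + x = 0 → x = 0)
    (p q : U) (hp : p * p = p) (hqq : q * q = q)
    (hpq : p * q = 0) (hqp : q * p = 0) (hsum : p + q = 1)
    (hC1 : ∀ x : U, q * x * p = 0)
    (hC2 : ∀ x y : U, p * x * p * (p * y * p) = p * y * p * (p * x * p))
    (hC3 : ∀ z : U, (∀ w : U, p * w * q * z = 0) → q * z * q = 0)
    (hJ : ∀ a, d (a * a) = d a * a + a * d a)
    (hdp : d p = 0) :
    ∀ a b, d (a * b) = d a * b + a * d b := by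
  have hp' : ∀ x : U, p * (p * x) = p * x := fun x => by rw [← mul_assoc, hp]
  have hq' : ∀ x : U, q * (q * x) = q * x := fun x => by rw [← mul_assoc, hqq]
  have hpq' : ∀ x : U, p * (q * x) = 0 := fun x => by rw [← mul_assoc, hpq, zero_mul]
  have hqp' : ∀ x : U, q * (p * x) = 0 := fun x => by rw [← mul_assoc, hqp, zero_mul]
  have hdq : d q = 0 := by
    have h1 : d 1 = 0 := by
      have h := hJ 1
      rw [mul_one, one_mul, mul_one] at h
      exact add_eq_right.mp h.symm
    have hq1 : q = 1 - p := by rw [← hsum]; abel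
    rw [hq1, map_sub, h1, hdp, sub_zero]
  have hdec : ∀ x : U, p * x * p + p * x * q + q * x * q = x := by
    intro x
    have h1 : (p + q) * x * (p + q) = x := by rw [hsum, one_mul, mul_one]
    have h2 : (p + q) * x * (p + q) = p*x*p + p*x*q + (q*x*p + q*x*q) := by noncomm_ring
    rw [h2, hC1 x, zero_add] at h1
    exact h1
  have hJ2 : ∀ a b, d (a * b + b * a) = d a * b + a * d b + d b * a + b * d a := by
    intro a b
    have h := hJ (a + b)
    rw [show (a+b)*(a+b) = a*a + (a*b + b*a) + b*b from by noncomm_ring,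
        map_add d (a*a + (a*b+b*a)) (b*b), map_add d (a*a) (a*b+b*a),
        hJ a, hJ b, map_add d a b] at h
    rw [← sub_eq_zero, ← sub_eq_zero_of_eq h]
    noncomm_ring
  have hJ3 : ∀ a b, d (a * b * a) = d a * b * a + a * d b * a + a * b * d a := by
    intro a b
    have h := hJ2 a (a*b + b*a)
    rw [show a*(a*b+b*a) + (a*b+b*a)*a = (a*a*b + b*(a*a)) + (a*b*a + a*b*a) from by noncomm_ring,
        map_add d (a*a*b + b*(a*a)) (a*b*a + a*b*a), map_add d (a*b*a) (a*b*a),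
        hJ2 (a*a) b, hJ a, hJ2 a b] at h
    refine sub_eq_zero.mp (htf _ ?_)
    rw [← sub_eq_zero_of_eq h]
    noncomm_ring
  have F_A : ∀ a : U, p * a * p = a → d a = p * d a * p := by
    intro a ha
    have h := hJ3 p a
    rw [ha, hdp] at h
    simpa using h
  have F_B : ∀ b : U, q * b * q = b → d b = q * d b * q := by
    intro b hb
    have h := hJ3 q b
    rw [hb, hdq] at h
    simpa using h
  have F_M : ∀ m : U, p * m * q = m → d m = p * d m * q := by
    intro m hm
    have hpm : p * m = m := by
      conv_lhs => rw [← hm]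
      conv_rhs => rw [← hm]
      simp only [mul_assoc, hp']
    have hmp : m * p = 0 := by
      conv_lhs => rw [← hm]
      simp only [mul_assoc, hqp', hqp, hpq, mul_zero, zero_mul]
    have h := hJ2 p m
    rw [hpm, hmp, add_zero, hdp] at h
    have h' : d m = p * d m + d m * p := by simpa using h
    have h1 : p * d m * p = 0 := by
      have hh : p * d m * p + p * d m * p = p * d m * p := by
        conv_rhs => rw [h']
        simp only [mul_add, add_mul]
        simp only [mul_assoc, hp', hp]
      exact add_eq_right.mp hh
    have h2 : q * d m * q = 0 := by
      have hh : q * d m * q = q * (p * d m + d m * p) * q := by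
        conv_lhs => rw [h']
      rw [hh]
      simp only [mul_add, add_mul]
      simp only [mul_assoc, hqp', hpq, mul_zero, zero_mul, add_zero]
    have h3 := hdec (d m)
    rw [h1, h2, zero_add, add_zero] at h3
    exact h3.symm
  -- nine case lemmas
  have L_AA : ∀ a b : U, p*a*p = a → p*b*p = b → d (a*b) = d a * b + a * d b := by
    intro a b ha hb
    have hab : a * b = b * a := by
      conv_lhs => rw [← ha, ← hb]
      conv_rhs => rw [← ha, ← hb]
      exact hC2 a b
    have hc1 : d b * a = a * d b := by
      conv_lhs => rw [F_A b hb, ← ha]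
      conv_rhs => rw [F_A b hb, ← ha]
      exact hC2 (d b) a
    have hc2 : b * d a = d a * b := by
      conv_lhs => rw [F_A a ha, ← hb]
      conv_rhs => rw [F_A a ha, ← hb]
      exact hC2 b (d a)
    have h := hJ2 a b
    rw [← hab, map_add d (a*b) (a*b), hc1, hc2] at h
    refine sub_eq_zero.mp (htf _ ?_)
    rw [← sub_eq_zero_of_eq h]
    noncomm_ring
  have L_AM : ∀ a m : U, p*a*p = a → p*m*q = m → d (a*m) = d a * m + a * d m := by
    intro a m ha hm
    have hma : m * a = 0 := by
      conv_lhs => rw [← hm, ← ha]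
      simp only [mul_assoc, hqp', hqp, hpq, mul_zero, zero_mul]
    have hc1 : d m * a = 0 := by
      conv_lhs => rw [F_M m hm, ← ha]
      simp only [mul_assoc, hqp', hqp, hpq, mul_zero, zero_mul]
    have hc2 : m * d a = 0 := by
      conv_lhs => rw [F_A a ha, ← hm]
      simp only [mul_assoc, hqp', hqp, hpq, mul_zero, zero_mul]
    have h := hJ2 a m
    rw [hma, add_zero, hc1, hc2] at h
    simpa using h
  have L_MB : ∀ m b : U, p*m*q = m → q*b*q = b → d (m*b) = d m * b + m * d b := by
    intro m b hm hb
    have hbm : b * m = 0 := by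
      conv_lhs => rw [← hb, ← hm]
      simp only [mul_assoc, hqp', hqp, hpq, mul_zero, zero_mul]
    have hc1 : d b * m = 0 := by
      conv_lhs => rw [F_B b hb, ← hm]
      simp only [mul_assoc, hqp', hqp, hpq, mul_zero, zero_mul]
    have hc2 : b * d m = 0 := by
      conv_lhs => rw [F_M m hm, ← hb]
      simp only [mul_assoc, hqp', hqp, hpq, mul_zero, zero_mul]
    have h := hJ2 m b
    rw [hbm, add_zero, hc1, hc2] at h
    simpa using h
  have L_BB : ∀ b c : U, q*b*q = b → q*c*q = c → d (b*c) = d b * c + b * d c := by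
    intro b c hb hc
    have hbc : q*(b*c)*q = b*c := by
      conv_lhs => rw [← hb, ← hc]
      conv_rhs => rw [← hb, ← hc]
      simp only [mul_assoc, hq', hqq]
    have key : ∀ w : U, p*w*q * (d (b*c) - (d b * c + b * d c)) = 0 := by
      intro w
      have hmw : p*(p*w*q)*q = p*w*q := by simp only [mul_assoc, hp', hqq, hp]
      have hmb : p*((p*w*q)*b)*q = (p*w*q)*b := by
        conv_lhs => rw [← hb]
        conv_rhs => rw [← hb]
        simp only [mul_assoc, hp', hqq, hq', hp]
      have e1 := L_MB (p*w*q) (b*c) hmw hbc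
      have e2 := L_MB ((p*w*q)*b) c hmb hc
      have e3 := L_MB (p*w*q) b hmw hb
      rw [← mul_assoc] at e1
      rw [e3] at e2
      have h := e1.symm.trans e2
      rw [← sub_eq_zero_of_eq h]
      noncomm_ring
    have hz := hC3 _ key
    have hzz : q * (d (b*c) - (d b * c + b * d c)) * q = d (b*c) - (d b * c + b * d c) := by
      have k1 : q * d (b*c) * q = d (b*c) := (F_B (b*c) hbc).symm
      have k2 : q * (d b * c) * q = d b * c := by
        conv_lhs => rw [F_B b hb, ← hc]
        conv_rhs => rw [F_B b hb, ← hc]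
        simp only [mul_assoc, hq', hqq]
      have k3 : q * (b * d c) * q = b * d c := by
        conv_lhs => rw [F_B c hc, ← hb]
        conv_rhs => rw [F_B c hc, ← hb]
        simp only [mul_assoc, hq', hqq]
      rw [mul_sub, sub_mul, mul_add, add_mul, k1, k2, k3]
    refine sub_eq_zero.mp ?_
    rw [← hzz]
    exact hz
  have L_AB : ∀ a b : U, p*a*p = a → q*b*q = b → d (a*b) = d a * b + a * d b := by
    intro a b ha hb
    have h0 : a*b = 0 := by
      conv_lhs => rw [← ha, ← hb]
      simp only [mul_assoc, hpq', hpq, hqp, mul_zero, zero_mul]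
    have h1 : d a * b = 0 := by
      conv_lhs => rw [F_A a ha, ← hb]
      simp only [mul_assoc, hpq', hpq, hqp, mul_zero, zero_mul]
    have h2 : a * d b = 0 := by
      conv_lhs => rw [F_B b hb, ← ha]
      simp only [mul_assoc, hpq', hpq, hqp, mul_zero, zero_mul]
    rw [h0, h1, h2, map_zero, add_zero]
  have L_BA : ∀ b a : U, q*b*q = b → p*a*p = a → d (b*a) = d b * a + b * d a := by
    intro b a hb ha
    have h0 : b*a = 0 := by
      conv_lhs => rw [← hb, ← ha]
      simp only [mul_assoc, hqp', hqp, hpq, mul_zero, zero_mul]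
    have h1 : d b * a = 0 := by
      conv_lhs => rw [F_B b hb, ← ha]
      simp only [mul_assoc, hqp', hqp, hpq, mul_zero, zero_mul]
    have h2 : b * d a = 0 := by
      conv_lhs => rw [F_A a ha, ← hb]
      simp only [mul_assoc, hqp', hqp, hpq, mul_zero, zero_mul]
    rw [h0, h1, h2, map_zero, add_zero]
  have L_MA : ∀ m a : U, p*m*q = m → p*a*p = a → d (m*a) = d m * a + m * d a := by
    intro m a hm ha
    have h0 : m*a = 0 := by
      conv_lhs => rw [← hm, ← ha]
      simp only [mul_assoc, hqp', hqp, hpq, mul_zero, zero_mul]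
    have h1 : d m * a = 0 := by
      conv_lhs => rw [F_M m hm, ← ha]
      simp only [mul_assoc, hqp', hqp, hpq, mul_zero, zero_mul]
    have h2 : m * d a = 0 := by
      conv_lhs => rw [F_A a ha, ← hm]
      simp only [mul_assoc, hqp', hqp, hpq, mul_zero, zero_mul]
    rw [h0, h1, h2, map_zero, add_zero]
  have L_MM : ∀ m m' : U, p*m*q = m → p*m'*q = m' → d (m*m') = d m * m' + m * d m' := by
    intro m m' hm hm'
    have h0 : m*m' = 0 := by
      conv_lhs => rw [← hm, ← hm']
      simp only [mul_assoc, hqp', hqp, hpq, mul_zero, zero_mul]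
    have h1 : d m * m' = 0 := by
      conv_lhs => rw [F_M m hm, ← hm']
      simp only [mul_assoc, hqp', hqp, hpq, mul_zero, zero_mul]
    have h2 : m * d m' = 0 := by
      conv_lhs => rw [F_M m' hm', ← hm]
      simp only [mul_assoc, hqp', hqp, hpq, mul_zero, zero_mul]
    rw [h0, h1, h2, map_zero, add_zero]
  have L_BM : ∀ b m : U, q*b*q = b → p*m*q = m → d (b*m) = d b * m + b * d m := by
    intro b m hb hm
    have h0 : b*m = 0 := by
      conv_lhs => rw [← hb, ← hm]
      simp only [mul_assoc, hqp', hqp, hpq, mul_zero, zero_mul]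
    have h1 : d b * m = 0 := by
      conv_lhs => rw [F_B b hb, ← hm]
      simp only [mul_assoc, hqp', hqp, hpq, mul_zero, zero_mul]
    have h2 : b * d m = 0 := by
      conv_lhs => rw [F_M m hm, ← hb]
      simp only [mul_assoc, hqp', hqp, hpq, mul_zero, zero_mul]
    rw [h0, h1, h2, map_zero, add_zero]
  have main : ∀ a m b a' m' b' : U, p*a*p = a → p*m*q = m → q*b*q = b →
      p*a'*p = a' → p*m'*q = m' → q*b'*q = b' →
      d ((a+m+b)*(a'+m'+b')) = d (a+m+b) * (a'+m'+b') + (a+m+b) * d (a'+m'+b') := by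
    intro a m b a' m' b' ha hm hb ha' hm' hb'
    rw [show (a+m+b)*(a'+m'+b') = a*a' + a*m' + a*b' + (m*a' + m*m' + m*b')
        + (b*a' + b*m' + b*b') from by noncomm_ring]
    simp only [map_add]
    rw [L_AA a a' ha ha', L_AM a m' ha hm', L_AB a b' ha hb',
        L_MA m a' hm ha', L_MM m m' hm hm', L_MB m b' hm hb',
        L_BA b a' hb ha', L_BM b m' hb hm', L_BB b b' hb hb']
    noncomm_ring
  intro x y
  have h := main (p*x*p) (p*x*q) (q*x*q) (p*y*p) (p*y*q) (q*y*q)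
    (by simp only [mul_assoc, hp', hp]) (by simp only [mul_assoc, hp', hqq, hp])
    (by simp only [mul_assoc, hq', hqq])
    (by simp only [mul_assoc, hp', hp]) (by simp only [mul_assoc, hp', hqq, hp])
    (by simp only [mul_assoc, hq', hqq])
  rw [hdec x, hdec y] at h
  exact h


lemma jordan_is_deriv (d : U →+ U)
    (htf : ∀ x : U, x + x = 0 → x = 0)
    (p q : U) (hp : p * p = p) (hqq : q * q = q)
    (hpq : p * q = 0) (hqp : q * p = 0) (hsum : p + q = 1)
    (hC1 : ∀ x : U, q * x * p = 0)
    (hC2 : ∀ x y : U, p * x * p * (p * y * p) = p * y * p * (p * x * p))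
    (hC3 : ∀ z : U, (∀ w : U, p * w * q * z = 0) → q * z * q = 0)
    (hJ : ∀ a, d (a * a) = d a * a + a * d a) :
    ∀ a b, d (a * b) = d a * b + a * d b := by
  have hp' : ∀ x : U, p * (p * x) = p * x := fun x => by rw [← mul_assoc, hp]
  have hdpe : d p = d p * p + p * d p := by
    have h := hJ p
    rwa [hp] at h
  have h1 : p * d p * p = 0 := by
    have hh : p * d p * p + p * d p * p = p * d p * p := by
      conv_rhs => rw [hdpe]
      simp only [mul_add, add_mul]
      simp only [mul_assoc, hp', hp]
    exact add_eq_right.mp hh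
  have h2 : q * d p * q = 0 := by
    have hh : q * d p * q = q * (d p * p + p * d p) * q := by
      conv_lhs => rw [hdpe]
    rw [hh]
    have hqp' : ∀ x : U, q * (p * x) = 0 := fun x => by rw [← mul_assoc, hqp, zero_mul]
    simp only [mul_add, add_mul]
    simp only [mul_assoc, hpq, hqp, hqp', mul_zero, zero_mul, add_zero]
  have hdec : p * (d p) * p + p * (d p) * q + q * (d p) * q = d p := by
    have ha : (p + q) * (d p) * (p + q) = d p := by rw [hsum, one_mul, mul_one]
    have hb : (p + q) * (d p) * (p + q) = p*(d p)*p + p*(d p)*q + (q*(d p)*p + q*(d p)*q) := by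
      noncomm_ring
    rw [hb, hC1 (d p), zero_add] at ha
    exact ha
  have hm0 : d p = p * d p * q := by
    rw [h1, h2, zero_add, add_zero] at hdec
    exact hdec.symm
  set D : U →+ U := AddMonoidHom.mk' (fun x => d x - (x * d p - d p * x))
    (by intro a b; simp only [map_add]; noncomm_ring) with hD
  have hDapp : ∀ x, D x = d x - (x * d p - d p * x) := fun _ => rfl
  have hDJ : ∀ a, D (a*a) = D a * a + a * D a := by
    intro a
    simp only [hDapp]
    rw [hJ a]
    noncomm_ring
  have hDp : D p = 0 := by
    rw [hDapp]
    have e1 : p * d p = d p := by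
      conv_lhs => rw [hm0]
      rw [← mul_assoc, ← mul_assoc, hp, ← hm0]
    have e2 : d p * p = 0 := by
      conv_lhs => rw [hm0]
      rw [mul_assoc, hqp, mul_zero]
    rw [e1, e2, sub_zero, sub_self]
  have hres := jordan_aux D htf p q hp hqq hpq hqp hsum hC1 hC2 hC3 hDJ hDp
  intro a b
  have h := hres a b
  simp only [hDapp] at h
  rw [← sub_eq_zero, ← sub_eq_zero_of_eq h]
  noncomm_ring

end Abstract


set_option maxHeartbeats 1600000 in
/-- Every Jordan derivation of the upper triangular matrix algebra `Tₙ(R)` over a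
2-torsion free commutative ring `R` with identity is a derivation. -/
theorem stmt_9 {R : Type*} [CommRing R]
    (h2 : ∀ x : R, x + x = 0 → x = 0)
    (n : ℕ) (hn : 1 ≤ n)
    (τ : upperTriangular n R →ₗ[R] upperTriangular n R)
    (hτ : ∀ a, τ (a * a) = τ a * a + a * τ a) :
    ∀ a b, τ (a * b) = τ a * b + a * τ b := by
  classical
  set i0 : Fin n := ⟨0, hn⟩ with hi0
  have hi0le : ∀ k : Fin n, i0 ≤ k := fun k => by simp [hi0, Fin.le_def]
  set E : Matrix (Fin n) (Fin n) R := Matrix.single i0 i0 1 with hE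
  have hEmem : E ∈ upperTriangular n R := by
    show E.BlockTriangular id
    intro i j hij
    rw [hE]
    show (if i0 = i ∧ i0 = j then (1:R) else 0) = 0
    rw [if_neg]
    rintro ⟨rfl, rfl⟩
    exact absurd hij (lt_irrefl _)
  have mEE : E * E = E := by
    rw [hE, Matrix.single_mul_single_same, one_mul]
  -- E * x * E = (x i0 i0) • basis
  have mExE : ∀ x : Matrix (Fin n) (Fin n) R,
      E * x * E = Matrix.single i0 i0 (x i0 i0) := by
    intro x
    ext i j
    by_cases hi : i = i0
    · subst hi
      by_cases hj : j = i0
      · subst hj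
        rw [Matrix.mul_single_apply_same,
            Matrix.single_mul_apply_same]
        show 1 * x i0 i0 * 1 = if i0 = i0 ∧ i0 = i0 then x i0 i0 else 0
        simp
      · rw [Matrix.mul_single_apply_of_ne _ _ _ _ _ hj]
        show (0:R) = if i0 = i0 ∧ i0 = j then x i0 i0 else 0
        rw [if_neg]
        rintro ⟨-, rfl⟩
        exact hj rfl
    · rw [mul_assoc, Matrix.single_mul_apply_of_ne _ _ _ _ _ hi]
      show (0:R) = if i0 = i ∧ i0 = j then x i0 i0 else 0
      rw [if_neg]
      rintro ⟨rfl, -⟩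
      exact hi rfl
  -- (1 - E) * x * E = 0 for upper triangular x
  have mC1 : ∀ x : Matrix (Fin n) (Fin n) R, x.BlockTriangular id →
      (1 - E) * x * E = 0 := by
    intro x hx
    have hrw : (1 - E) * x * E = x * E - E * (x * E) := by noncomm_ring
    rw [hrw]
    ext i j
    rw [Matrix.sub_apply, Matrix.zero_apply]
    by_cases hj : j = i0
    · subst hj
      by_cases hi : i = i0
      · subst hi
        rw [Matrix.single_mul_apply_same,
            Matrix.mul_single_apply_same]
        ring
      · rw [Matrix.single_mul_apply_of_ne _ _ _ _ _ hi,
            Matrix.mul_single_apply_same]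
        have hlt : (id i0 : Fin n) < id i := lt_of_le_of_ne (hi0le i) (Ne.symm hi)
        rw [hx hlt]
        ring
    · rw [Matrix.mul_single_apply_of_ne _ _ _ _ _ hj]
      by_cases hi : i = i0
      · subst hi
        rw [Matrix.single_mul_apply_same,
            Matrix.mul_single_apply_of_ne _ _ _ _ _ hj]
        ring
      · rw [Matrix.single_mul_apply_of_ne _ _ _ _ _ hi]
        ring
  -- faithfulness
  have mC3 : ∀ z : Matrix (Fin n) (Fin n) R,
      (∀ k : Fin n, k ≠ i0 → Matrix.single i0 k (1:R) * z = 0) →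
      (1 - E) * z = 0 := by
    intro z hz
    ext i j
    rw [Matrix.sub_mul, one_mul, Matrix.sub_apply, Matrix.zero_apply]
    by_cases hi : i = i0
    · subst hi
      rw [Matrix.single_mul_apply_same, one_mul, sub_self]
    · rw [Matrix.single_mul_apply_of_ne _ _ _ _ _ hi, sub_zero]
      have h := hz i hi
      have h' := congrFun (congrFun h i0) j
      rw [Matrix.single_mul_apply_same, one_mul] at h'
      exact h'
  -- now lift to the subalgebra
  set P : upperTriangular n R := ⟨E, hEmem⟩ with hPdef
  set Q : upperTriangular n R := 1 - P with hQdef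
  have coeP : (P : Matrix (Fin n) (Fin n) R) = E := rfl
  have coeQ : (Q : Matrix (Fin n) (Fin n) R) = 1 - E := by
    rw [hQdef, AddSubgroupClass.coe_sub, OneMemClass.coe_one, coeP]
  have htf : ∀ x : upperTriangular n R, x + x = 0 → x = 0 := by
    intro x hx
    have hx' : (x : Matrix (Fin n) (Fin n) R) + x = 0 := by
      have := congrArg (Subtype.val) hx
      simpa using this
    apply Subtype.ext
    ext i j
    exact h2 _ (by simpa using congrFun (congrFun hx' i) j)
  have hp : P * P = P := Subtype.ext (by rw [MulMemClass.coe_mul, coeP]; exact mEE)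
  have hqq : Q * Q = Q := by
    rw [hQdef, sub_mul, one_mul, mul_sub, mul_one, hp, sub_self, sub_zero]
  have hpq : P * Q = 0 := by rw [hQdef, mul_sub, mul_one, hp, sub_self]
  have hqp : Q * P = 0 := by rw [hQdef, sub_mul, one_mul, hp, sub_self]
  have hsum : P + Q = 1 := by rw [hQdef]; exact add_sub_cancel P 1
  have hC1 : ∀ x : upperTriangular n R, Q * x * P = 0 := by
    intro x
    apply Subtype.ext
    rw [MulMemClass.coe_mul, MulMemClass.coe_mul, coeQ, coeP, ZeroMemClass.coe_zero]
    exact mC1 (x : Matrix (Fin n) (Fin n) R) x.2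
  have hC2 : ∀ x y : upperTriangular n R, P * x * P * (P * y * P) = P * y * P * (P * x * P) := by
    intro x y
    apply Subtype.ext
    simp only [MulMemClass.coe_mul, coeP]
    rw [mExE (x : Matrix (Fin n) (Fin n) R), mExE (y : Matrix (Fin n) (Fin n) R),
        Matrix.single_mul_single_same, Matrix.single_mul_single_same, mul_comm]
  have hC3 : ∀ z : upperTriangular n R, (∀ w : upperTriangular n R, P * w * Q * z = 0) → Q * z * Q = 0 := by
    intro z hz
    have hrows : ∀ k : Fin n, k ≠ i0 → Matrix.single i0 k (1:R) * (z : Matrix (Fin n) (Fin n) R) = 0 := by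
      intro k hk
      have hwmem : Matrix.single i0 k (1:R) ∈ upperTriangular n R := by
        show (Matrix.single i0 k (1:R)).BlockTriangular id
        intro i j hij
        show (if i0 = i ∧ k = j then (1:R) else 0) = 0
        rw [if_neg]
        rintro ⟨rfl, rfl⟩
        exact absurd hij (not_lt.mpr (hi0le k))
      have h := hz ⟨Matrix.single i0 k 1, hwmem⟩
      have h' := congrArg (Subtype.val) h
      simp only [MulMemClass.coe_mul, coeP, coeQ, ZeroMemClass.coe_zero] at h'
      -- h' : E * sb * (1 - E) * z = 0
      rw [hE, Matrix.single_mul_single_same, one_mul] at h'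
      rw [show Matrix.single i0 k (1:R) * (1 - Matrix.single i0 i0 1)
            = Matrix.single i0 k 1 - Matrix.single i0 k 1 * Matrix.single i0 i0 1
          from by noncomm_ring,
          Matrix.single_mul_single_of_ne (h := hk), sub_zero] at h'
      exact h'
    have hz0 : ((1 : Matrix (Fin n) (Fin n) R) - E) * (z : Matrix (Fin n) (Fin n) R) = 0 :=
      mC3 _ hrows
    apply Subtype.ext
    rw [MulMemClass.coe_mul, MulMemClass.coe_mul, coeQ, ZeroMemClass.coe_zero, hz0, zero_mul]
  have hJ' : ∀ a, τ.toAddMonoidHom (a * a) =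
      τ.toAddMonoidHom a * a + a * τ.toAddMonoidHom a := hτ
  exact jordan_is_deriv τ.toAddMonoidHom htf P Q hp hqq hpq hqp hsum hC1 hC2 hC3 hJ'
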